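/- Let A(x) = Σ a_n x^n and B(x) = Σ b_n x^n be power series convergent on [0, r) with b_n > 0 for all n. If the sequence (a_n / b_n) is strictly increasing, then the function x ↦ A(x)/B(x) is strictly increasing on (0, r). -/

import Mathlib

theorem power_series_ratio_strictMono (a b : ℕ → ℝ) (r : ℝ) (hr : 0 < r)
    (hb : ∀ n, 0 < b n)
    (ha_conv : ∀ x : ℝ, 0 ≤ x → x < r → Summable (fun n => a n * x ^ n))
    (hb_conv : ∀ x : ℝ, 0 ≤ x → x < r → Summable (fun n => b n * x ^ n))
    (h : StrictMono (fun n => a n / b n)) :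
    StrictMonoOn (fun x => (∑' n, a n * x ^ n) / (∑' n, b n * x ^ n)) (Set.Ioo 0 r) := by
  classical
  rintro x ⟨hx0, hxr⟩ y ⟨hy0, hyr⟩ hxy
  have hxnn : (0:ℝ) ≤ x := le_of_lt hx0
  have hynn : (0:ℝ) ≤ y := le_of_lt hy0
  have Sax := ha_conv x hxnn hxr
  have Sbx := hb_conv x hxnn hxr
  have Say := ha_conv y hynn hyr
  have Sby := hb_conv y hynn hyr
  have hBx : 0 < ∑' n, b n * x ^ n := by
    refine Summable.tsum_pos Sbx (fun n => le_of_lt (mul_pos (hb n) (pow_pos hx0 n))) 0 ?_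
    exact mul_pos (hb 0) (pow_pos hx0 0)
  have hBy : 0 < ∑' n, b n * y ^ n := by
    refine Summable.tsum_pos Sby (fun n => le_of_lt (mul_pos (hb n) (pow_pos hy0 n))) 0 ?_
    exact mul_pos (hb 0) (pow_pos hy0 0)
  set t : ℝ := (∑' n, a n * x ^ n) / (∑' n, b n * x ^ n) with ht
  set c : ℕ → ℝ := fun n => a n - t * b n with hc
  have hceq : ∀ z : ℝ, (fun n => c n * z ^ n) = fun n => a n * z ^ n - t * (b n * z ^ n) := by
    intro z; funext n; simp [hc]; ring
  have Scx : Summable (fun n => c n * x ^ n) := by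
    rw [hceq]; exact Sax.sub (Sbx.mul_left t)
  have Scy : Summable (fun n => c n * y ^ n) := by
    rw [hceq]; exact Say.sub (Sby.mul_left t)
  have hcx0 : ∑' n, c n * x ^ n = 0 := by
    rw [hceq, Summable.tsum_sub Sax (Sbx.mul_left t), tsum_mul_left, ht]
    field_simp
    ring
  have hcy : ∑' n, c n * y ^ n = (∑' n, a n * y ^ n) - t * (∑' n, b n * y ^ n) := by
    rw [hceq, Summable.tsum_sub Say (Sby.mul_left t), tsum_mul_left]
  -- c n / b n is strictly monotone
  have hcb : ∀ n, c n / b n = a n / b n - t := by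
    intro n
    field_simp [hc, (hb n).ne']; ring
  have hmono : StrictMono fun n => c n / b n := by
    intro m n hmn
    simp only [hcb]
    exact sub_lt_sub_right (h hmn) t
  -- there is an index with nonneg c
  have hS : ∃ n, 0 ≤ c n := by
    by_contra hall
    push_neg at hall
    have : 0 < ∑' n, -(c n * x ^ n) := by
      refine Summable.tsum_pos Scx.neg (fun n => ?_) 0 ?_
      · exact le_of_lt (neg_pos.mpr (mul_neg_of_neg_of_pos (hall n) (pow_pos hx0 n)))
      · exact neg_pos.mpr (mul_neg_of_neg_of_pos (hall 0) (pow_pos hx0 0))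
    rw [tsum_neg, hcx0] at this
    simp at this
  set N := Nat.find hS with hN
  have hNspec : 0 ≤ c N := Nat.find_spec hS
  have hNmin : ∀ n < N, c n < 0 := fun n hn => lt_of_not_ge (Nat.find_min hS hn)
  -- c 0 < 0
  have hc0 : c 0 < 0 := by
    by_contra h0
    push_neg at h0
    have hpos : ∀ n, 1 ≤ n → 0 < c n := by
      intro n hn
      have h1 : c 0 / b 0 < c n / b n := hmono (by omega)
      have h2 : 0 ≤ c 0 / b 0 := div_nonneg h0 (le_of_lt (hb 0))
      have : 0 < c n / b n := lt_of_le_of_lt h2 h1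
      have := mul_pos this (hb n)
      rwa [div_mul_cancel₀ _ (hb n).ne'] at this
    have : 0 < ∑' n, c n * x ^ n := by
      refine Summable.tsum_pos Scx (fun n => ?_) 1 ?_
      · rcases Nat.eq_zero_or_pos n with rfl | hn
        · exact mul_nonneg h0 (le_of_lt (pow_pos hx0 0))
        · exact le_of_lt (mul_pos (hpos n hn) (pow_pos hx0 n))
      · exact mul_pos (hpos 1 le_rfl) (pow_pos hx0 1)
    rw [hcx0] at this; exact lt_irrefl 0 this
  have hN1 : 1 ≤ N := by
    rcases Nat.eq_zero_or_pos N with h0 | h0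
    · rw [h0] at hNspec; exact absurd hNspec (not_le.mpr hc0)
    · exact h0
  -- for n ≥ N, c n ≥ 0
  have hge : ∀ n, N ≤ n → 0 ≤ c n := by
    intro n hn
    rcases eq_or_lt_of_le hn with rfl | hlt
    · exact hNspec
    · have h1 : c N / b N < c n / b n := hmono hlt
      have h2 : 0 ≤ c N / b N := div_nonneg hNspec (le_of_lt (hb N))
      have : 0 < c n / b n := lt_of_le_of_lt h2 h1
      have := mul_pos this (hb n)
      rw [div_mul_cancel₀ _ (hb n).ne'] at this
      exact le_of_lt this
  set q : ℝ := y / x with hq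
  have hq1 : 1 < q := (one_lt_div hx0).mpr hxy
  have hq0 : 0 < q := lt_trans one_pos hq1
  have hyxq : ∀ n : ℕ, y ^ n = x ^ n * q ^ n := by
    intro n
    rw [← mul_pow, hq, mul_div_cancel₀ _ hx0.ne']
  -- key comparison
  have hkey : ∀ n, c n * x ^ n * q ^ N ≤ c n * y ^ n := by
    intro n
    rw [hyxq n, ← mul_assoc]
    rcases le_or_gt N n with hn | hn
    · exact mul_le_mul_of_nonneg_left (pow_le_pow_right₀ (le_of_lt hq1) hn)
        (mul_nonneg (hge n hn) (le_of_lt (pow_pos hx0 n)))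
    · exact mul_le_mul_of_nonpos_left (pow_le_pow_right₀ (le_of_lt hq1) (le_of_lt hn))
        (le_of_lt (mul_neg_of_neg_of_pos (hNmin n hn) (pow_pos hx0 n)))
  have hstrict : c 0 * x ^ 0 * q ^ N < c 0 * y ^ 0 := by
    simp only [pow_zero, mul_one]
    nlinarith [one_lt_pow₀ hq1 (by omega : N ≠ 0), hc0]
  have hsum_lt : ∑' n, c n * x ^ n * q ^ N < ∑' n, c n * y ^ n :=
    Summable.tsum_lt_tsum hkey hstrict (Scx.mul_right _) Scy
  rw [tsum_mul_right, hcx0, zero_mul, hcy] at hsum_lt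
  -- conclude
  have : t * (∑' n, b n * y ^ n) < ∑' n, a n * y ^ n := by linarith
  calc t < (∑' n, a n * y ^ n) / (∑' n, b n * y ^ n) := (lt_div_iff₀ hBy).mpr this
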